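/- arXiv:1503.07393 — 2 statements merged into one kernel-verified Lean document; each statement's English description precedes it below -/
import Mathlib

section
/- Let n be a natural number and let B_k^n denote the Bernstein polynomial of degree n. For every natural number r with r ≤ n and every k with 0 ≤ k ≤ r, the degree-elevation identity B_k^r(x) = Σ_{i=k}^{n-r+k} [ C(r,k)·C(n-r,i-k) / C(n,i) ] · B_i^n(x) holds as an identity of real polynomials. -/
open Polynomial

/-- Degree elevation for Bernstein polynomials: for `r ≤ n` and `k ≤ r`,
`B_k^r(x) = ∑_{i=k}^{n-r+k} (C(r,k)·C(n-r,i-k)/C(n,i)) · B_i^n(x)`. -/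
theorem bernstein_degree_elevation (n r k : ℕ) (hrn : r ≤ n) (hkr : k ≤ r) :
    bernsteinPolynomial ℝ r k =
      ∑ i ∈ Finset.Icc k (n - r + k),
        Polynomial.C (((r.choose k : ℝ) * ((n - r).choose (i - k) : ℝ)) / (n.choose i : ℝ)) *
          bernsteinPolynomial ℝ n i := by
  rw [← Finset.Ico_add_one_right_eq_Icc, Finset.sum_Ico_eq_sum_range]
  have hidx : n - r + k + 1 - k = n - r + 1 := by omega
  rw [hidx]
  have h1 : bernsteinPolynomial ℝ r k
      = bernsteinPolynomial ℝ r k * (X + (1 - X) : ℝ[X]) ^ (n - r) := by simp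
  rw [h1, add_pow, Finset.mul_sum]
  refine Finset.sum_congr rfl fun j hj => ?_
  have hjle : j ≤ n - r := by simpa [Nat.lt_succ_iff] using Finset.mem_range.mp hj
  have hkj : k + j ≤ n := by omega
  have hne : ((n.choose (k + j) : ℝ)) ≠ 0 := by
    exact_mod_cast (Nat.choose_pos hkj).ne'
  have e1 : r - k + (n - r - j) = n - (k + j) := by omega
  have hC : (Polynomial.C (((r.choose k : ℝ) * ((n - r).choose (k + j - k) : ℝ)) /
      (n.choose (k + j) : ℝ)) : ℝ[X]) * (n.choose (k + j) : ℝ[X])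
      = (r.choose k : ℝ[X]) * ((n - r).choose j : ℝ[X]) := by
    have : k + j - k = j := by omega
    rw [this, ← Polynomial.C_eq_natCast, ← Polynomial.C_eq_natCast, ← Polynomial.C_eq_natCast,
      ← C_mul, ← C_mul]
    congr 1
    field_simp
  simp only [bernsteinPolynomial, nsmul_eq_mul]
  rw [← e1, pow_add, pow_add]
  calc (r.choose k : ℝ[X]) * X ^ k * (1 - X) ^ (r - k) *
        (X ^ j * (1 - X) ^ (n - r - j) * ((n - r).choose j : ℝ[X]))
      = (r.choose k : ℝ[X]) * ((n - r).choose j : ℝ[X]) *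
        (X ^ k * X ^ j * ((1 - X) ^ (r - k) * (1 - X) ^ (n - r - j))) := by ring
    _ = _ := by rw [← hC]; ring
end

section
/- For natural numbers r and k with 0 ≤ k ≤ r, the product of generalized (half-integer) binomial coefficients satisfies C(r - 1/2, k) · C(r - 1/2, r - k) = C(2r, r) · C(2r, 2k) / 2^{2r}, as an identity of rational (or real) numbers. -/
open Finset

/-- The generalized binomial coefficient `C(a, k) = a(a-1)⋯(a-k+1)/k!` for real `a`. -/
noncomputable def genChoose (a : ℝ) (k : ℕ) : ℝ :=
  (∏ j ∈ Finset.range k, (a - j)) / (k.factorial : ℝ)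

lemma genChoose_half_closed (r k : ℕ) (hkr : k ≤ r) :
    genChoose ((r : ℝ) - 1 / 2) k =
      ((2*r).factorial : ℝ) * ((r-k).factorial : ℝ) /
        (((2*r-2*k).factorial : ℝ) * 2 ^ (2*k) * (r.factorial : ℝ) * (k.factorial : ℝ)) := by
  induction k with
  | zero =>
    simp [genChoose]
    rw [div_self (by positivity)]
  | succ k ih =>
    have hk : k ≤ r := by omega
    have step : genChoose ((r:ℝ)-1/2) (k+1)
        = genChoose ((r:ℝ)-1/2) k * (((r:ℝ)-1/2 - k)/((k:ℝ)+1)) := by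
      unfold genChoose
      rw [Finset.prod_range_succ, Nat.factorial_succ]
      push_cast
      rw [div_mul_div_comm]
      ring
    rw [step, ih hk]
    obtain ⟨m, rfl⟩ : ∃ m, r = k + 1 + m := ⟨r - (k+1), by omega⟩
    have h1 : k+1+m - k = m+1 := by omega
    have h2 : k+1+m - (k+1) = m := by omega
    have h3 : 2*(k+1+m) - 2*k = 2*m+2 := by omega
    have h4 : 2*(k+1+m) - 2*(k+1) = 2*m := by omega
    rw [h1, h2, h3, h4]
    rw [show 2*m+2 = (2*m+1)+1 from rfl, Nat.factorial_succ (2*m+1), Nat.factorial_succ (2*m),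
      Nat.factorial_succ m, Nat.factorial_succ k]
    have f1 : ((2*m).factorial : ℝ) ≠ 0 := Nat.cast_ne_zero.mpr (Nat.factorial_ne_zero _)
    have f2 : (m.factorial : ℝ) ≠ 0 := Nat.cast_ne_zero.mpr m.factorial_ne_zero
    have f3 : (k.factorial : ℝ) ≠ 0 := Nat.cast_ne_zero.mpr k.factorial_ne_zero
    have f4 : ((k+1+m).factorial : ℝ) ≠ 0 := Nat.cast_ne_zero.mpr (Nat.factorial_ne_zero _)
    have f5 : ((k:ℝ)+1) ≠ 0 := by positivity
    have f6 : ((m:ℝ)+1) ≠ 0 := by positivity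
    push_cast
    field_simp
    ring

/-- For `k ≤ r`,
`C(r - 1/2, k) · C(r - 1/2, r - k) = C(2r, r) · C(2r, 2k) / 2^(2r)`. -/
theorem half_integer_binomial_product (r k : ℕ) (hkr : k ≤ r) :
    genChoose ((r : ℝ) - 1 / 2) k * genChoose ((r : ℝ) - 1 / 2) (r - k) =
      ((2 * r).choose r : ℝ) * ((2 * r).choose (2 * k) : ℝ) / 2 ^ (2 * r) := by
  obtain ⟨m, rfl⟩ : ∃ m, r = k + m := ⟨r - k, by omega⟩
  have e1 : k + m - k = m := by omega
  rw [e1, genChoose_half_closed (k+m) k (by omega), genChoose_half_closed (k+m) m (by omega)]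
  have e2 : 2*(k+m) - 2*k = 2*m := by omega
  have e3 : k+m - m = k := by omega
  have e4 : 2*(k+m) - 2*m = 2*k := by omega
  rw [e2, e3, e4]
  rw [Nat.cast_choose ℝ (show k+m ≤ 2*(k+m) by omega),
      Nat.cast_choose ℝ (show 2*k ≤ 2*(k+m) by omega)]
  have e5 : 2*(k+m) - (k+m) = k+m := by omega
  have e6 : 2*(k+m) - 2*k = 2*m := by omega
  rw [e5, e6]
  have f1 : ((2*m).factorial : ℝ) ≠ 0 := Nat.cast_ne_zero.mpr (Nat.factorial_ne_zero _)
  have f2 : ((2*k).factorial : ℝ) ≠ 0 := Nat.cast_ne_zero.mpr (Nat.factorial_ne_zero _)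
  have f3 : (m.factorial : ℝ) ≠ 0 := Nat.cast_ne_zero.mpr m.factorial_ne_zero
  have f4 : (k.factorial : ℝ) ≠ 0 := Nat.cast_ne_zero.mpr k.factorial_ne_zero
  have f5 : ((k+m).factorial : ℝ) ≠ 0 := Nat.cast_ne_zero.mpr (Nat.factorial_ne_zero _)
  simp only [e1]
  field_simp
  ring
end
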